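/- arXiv:1304.5438 — 5 statements merged into one kernel-verified Lean document; each statement's English description precedes it below -/
import Mathlib

section
/- Let (G,v₀,W) be a Banach–Mazur game on a finite graph. Player 0 has a length-counting winning strategy for (G,v₀,W) if and only if Player 0 has a winning strategy for (G,v₀,W). -/
open MeasureTheory
open scoped ENNReal NNReal

namespace BMGame

variable {V : Type*}

/-- The prefix of length `n` of the infinite sequence `ρ`. -/
def pref (ρ : ℕ → V) (n : ℕ) : List V := (List.range n).map ρ

/-- `ρ` is an infinite path of the graph `E` starting at `v₀`. -/
def IsPlay (E : V → V → Prop) (v₀ : V) (ρ : ℕ → V) : Prop :=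
  ρ 0 = v₀ ∧ ∀ n, E (ρ n) (ρ (n + 1))

/-- `π` is a nonempty finite path of the graph `E` starting at `v₀` (a position of the game). -/
def IsPos (E : V → V → Prop) (v₀ : V) (π : List V) : Prop :=
  π.head? = some v₀ ∧ π.Chain' E

/-- A strategy for player 0 assigns to each position the (nonempty) block of vertices
appended by player 0's move; `(π ++ f π).Chain' E` says that this block is a path
starting at the last vertex of `π`. -/
def IsStrategy (E : V → V → Prop) (v₀ : V) (f : List V → List V) : Prop :=
  ∀ π, IsPos E v₀ π → f π ≠ [] ∧ (π ++ f π).Chain' E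

/-- The play `ρ` is consistent with the strategy `f`: there are cut points
`c 0, c 1, …` (the lengths of the prefixes built after each move of player 1) such that
after each such prefix player 0 plays according to `f`, and player 1 then appends a
nonempty block. -/
def ConsGen (f : List V → List V) (ρ : ℕ → V) : Prop :=
  ∃ c : ℕ → ℕ, 1 ≤ c 0 ∧ ∀ i,
    pref ρ (c i + (f (pref ρ (c i))).length) = pref ρ (c i) ++ f (pref ρ (c i)) ∧
    c i + (f (pref ρ (c i))).length < c (i + 1)

/-- `f` is a winning strategy for player 0 in the Banach–Mazur game `(E, v₀, W)`. -/
def WinningStrategy (E : V → V → Prop) (v₀ : V) (W : Set (ℕ → V))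
    (f : List V → List V) : Prop :=
  IsStrategy E v₀ f ∧ ∀ ρ, IsPlay E v₀ ρ → ConsGen f ρ → ρ ∈ W

/-- The strategy `f` is `b`-bounded: each of its moves has length at most `b`. -/
def BoundedBy (E : V → V → Prop) (v₀ : V) (b : ℕ) (f : List V → List V) : Prop :=
  ∀ π, IsPos E v₀ π → (f π).length ≤ b

/-- A positional strategy assigns to each vertex the nonempty block appended. -/
def IsPositional (E : V → V → Prop) (f : V → List V) : Prop :=
  ∀ v, f v ≠ [] ∧ (v :: f v).Chain' E

/-- Consistency with a positional strategy: after each prefix chosen by player 1,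
player 0 plays `f` of the current (last) vertex. -/
def ConsPositional (f : V → List V) (ρ : ℕ → V) : Prop :=
  ∃ c : ℕ → ℕ, 1 ≤ c 0 ∧ ∀ i,
    pref ρ (c i + (f (ρ (c i - 1))).length) = pref ρ (c i) ++ f (ρ (c i - 1)) ∧
    c i + (f (ρ (c i - 1))).length < c (i + 1)

def PositionalWinning (E : V → V → Prop) (v₀ : V) (W : Set (ℕ → V)) (f : V → List V) : Prop :=
  IsPositional E f ∧ ∀ ρ, IsPlay E v₀ ρ → ConsPositional f ρ → ρ ∈ W

/-- Structural requirement shared by move-counting and length-counting strategies: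
for `n ≥ 1`, `h v n` is a nonempty block forming a path from `v`. -/
def IsCountingStrategy (E : V → V → Prop) (h : V → ℕ → List V) : Prop :=
  ∀ v n, 1 ≤ n → h v n ≠ [] ∧ (v :: h v n).Chain' E

/-- Consistency with a move-counting strategy: at its `i`-th move (`i ≥ 1`) player 0 plays
`h (current vertex) i`. -/
def ConsMoveCounting (h : V → ℕ → List V) (ρ : ℕ → V) : Prop :=
  ∃ c : ℕ → ℕ, 1 ≤ c 0 ∧ ∀ i,
    pref ρ (c i + (h (ρ (c i - 1)) (i + 1)).length) = pref ρ (c i) ++ h (ρ (c i - 1)) (i + 1) ∧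
    c i + (h (ρ (c i - 1)) (i + 1)).length < c (i + 1)

def MoveCountingWinning (E : V → V → Prop) (v₀ : V) (W : Set (ℕ → V))
    (h : V → ℕ → List V) : Prop :=
  IsCountingStrategy E h ∧ ∀ ρ, IsPlay E v₀ ρ → ConsMoveCounting h ρ → ρ ∈ W

/-- Consistency with a length-counting strategy: after a prefix of length `c i`
player 0 plays `h (current vertex) (c i)`. -/
def ConsLengthCounting (h : V → ℕ → List V) (ρ : ℕ → V) : Prop :=
  ∃ c : ℕ → ℕ, 1 ≤ c 0 ∧ ∀ i,
    pref ρ (c i + (h (ρ (c i - 1)) (c i)).length) = pref ρ (c i) ++ h (ρ (c i - 1)) (c i) ∧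
    c i + (h (ρ (c i - 1)) (c i)).length < c (i + 1)

def LengthCountingWinning (E : V → V → Prop) (v₀ : V) (W : Set (ℕ → V))
    (h : V → ℕ → List V) : Prop :=
  IsCountingStrategy E h ∧ ∀ ρ, IsPlay E v₀ ρ → ConsLengthCounting h ρ → ρ ∈ W

/-- The segment `ρ a, ρ (a+1), …, ρ (b-1)` of an infinite sequence. -/
def seg (ρ : ℕ → V) (a b : ℕ) : List V := (List.range (b - a)).map fun j => ρ (a + j)

/-- A last-move strategy is defined on all nonempty finite paths of the graph. -/
def IsLastMove (E : V → V → Prop) (g : List V → List V) : Prop :=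
  ∀ π, π ≠ [] → π.Chain' E → g π ≠ [] ∧ (π ++ g π).Chain' E

/-- Consistency with the last-move strategy `g`: the play decomposes as
`π₁ g(π₁) π₂ g(π₂) ⋯` where the `πᵢ` are the (nonempty) moves of player 1. -/
def ConsLastMove (g : List V → List V) (ρ : ℕ → V) : Prop :=
  ∃ s e : ℕ → ℕ, s 0 = 0 ∧ (∀ i, s i < e i) ∧ ∀ i,
    seg ρ (e i) (e i + (g (seg ρ (s i) (e i))).length) = g (seg ρ (s i) (e i)) ∧
    s (i + 1) = e i + (g (seg ρ (s i) (e i))).length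

def LastMoveWinning (E : V → V → Prop) (v₀ : V) (W : Set (ℕ → V)) (g : List V → List V) : Prop :=
  IsLastMove E g ∧ ∀ ρ, IsPlay E v₀ ρ → ConsLastMove g ρ → ρ ∈ W

/-- The cylinder generated by the finite word `π`. -/
def Cyl (π : List V) : Set (ℕ → V) := {ρ | pref ρ π.length = π}

/-- One-step transition probabilities obtained from the weights `w`. -/
noncomputable def transP [Fintype V] (E : V → V → Prop) (w : V → V → ℝ≥0) (u v : V) : ℝ≥0∞ := by
  classical
  exact if E u v then
    (w u v : ℝ≥0∞) / ∑ x ∈ Finset.univ.filter (fun x => E u x), (w u x : ℝ≥0∞)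
  else 0

/-- The probability of the cylinder generated by a finite word: the product of the
one-step transition probabilities along it. -/
noncomputable def pathP [Fintype V] (E : V → V → Prop) (w : V → V → ℝ≥0) (π : List V) : ℝ≥0∞ :=
  ((π.zip π.tail).map fun q => transP E w q.1 q.2).prod

/-- `P` is the reasonable probability measure associated with the weights `w`. -/
def IsReasonable [Fintype V] [MeasurableSpace (ℕ → V)] (E : V → V → Prop) (v₀ : V)
    (w : V → V → ℝ≥0) (P : Measure (ℕ → V)) : Prop :=
  IsProbabilityMeasure P ∧ ∀ π : List V, π.head? = some v₀ → P (Cyl π) = pathP E w π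

/-- `Ps` is a legal move of player 0 in the generalised game `G_α` at position `π`: a
finite nonempty set of nonempty finite paths from the last vertex of `π` whose union of
cylinders has conditional probability at least `α` given `Cyl π`. -/
def LegalProposal [MeasurableSpace (ℕ → V)] (E : V → V → Prop) (P : Measure (ℕ → V)) (α : ℝ)
    (π : List V) (Ps : Finset (List V)) : Prop :=
  Ps.Nonempty ∧ (∀ τ ∈ Ps, τ ≠ [] ∧ (π ++ τ).Chain' E) ∧
    ENNReal.ofReal α ≤ P (⋃ τ ∈ Ps, Cyl (π ++ τ)) / P (Cyl π)

/-- An α-strategy for player 0. -/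
def IsAlphaStrategy [MeasurableSpace (ℕ → V)] (E : V → V → Prop) (v₀ : V) (P : Measure (ℕ → V))
    (α : ℝ) (f : List V → Finset (List V)) : Prop :=
  ∀ π, IsPos E v₀ π → LegalProposal E P α π (f π)

/-- Consistency with an α-strategy: at each stage, player 1 picks some element of the
set proposed by player 0 and appends a nonempty block after it. -/
def ConsAlpha (f : List V → Finset (List V)) (ρ : ℕ → V) : Prop :=
  ∃ c : ℕ → ℕ, 1 ≤ c 0 ∧ ∀ i, ∃ τ ∈ f (pref ρ (c i)),
    pref ρ (c i + τ.length) = pref ρ (c i) ++ τ ∧ c i + τ.length < c (i + 1)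

def AlphaWinning [MeasurableSpace (ℕ → V)] (E : V → V → Prop) (v₀ : V) (P : Measure (ℕ → V))
    (α : ℝ) (W : Set (ℕ → V)) (f : List V → Finset (List V)) : Prop :=
  IsAlphaStrategy E v₀ P α f ∧ ∀ ρ, IsPlay E v₀ ρ → ConsAlpha f ρ → ρ ∈ W

/-- A strategy for player 1 in the generalised game `G_α` consists of an initial path and,
for each position together with a legal proposal of player 0, the selected element of the
proposal and the next (nonempty) block played by player 1. -/
def IsP1Strategy [MeasurableSpace (ℕ → V)] (E : V → V → Prop) (v₀ : V) (P : Measure (ℕ → V))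
    (α : ℝ) (init : List V) (g : List V → Finset (List V) → List V × List V) : Prop :=
  IsPos E v₀ init ∧
    ∀ π Ps, IsPos E v₀ π → LegalProposal E P α π Ps →
      (g π Ps).1 ∈ Ps ∧ (g π Ps).2 ≠ [] ∧ (π ++ ((g π Ps).1 ++ (g π Ps).2)).Chain' E

/-- Consistency of a play with player 1's strategy `(init, g)`:
there is a sequence of legal proposals of player 0 generating the play. -/
def ConsP1 [MeasurableSpace (ℕ → V)] (E : V → V → Prop) (P : Measure (ℕ → V)) (α : ℝ)
    (init : List V) (g : List V → Finset (List V) → List V × List V) (ρ : ℕ → V) : Prop :=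
  ∃ (Ps : ℕ → Finset (List V)) (p : ℕ → List V), p 0 = init ∧
    (∀ n, pref ρ (p n).length = p n) ∧
    ∀ n, LegalProposal E P α (p n) (Ps n) ∧
      p (n + 1) = p n ++ ((g (p n) (Ps n)).1 ++ (g (p n) (Ps n)).2)

def P1Winning [MeasurableSpace (ℕ → V)] (E : V → V → Prop) (v₀ : V) (P : Measure (ℕ → V))
    (α : ℝ) (W : Set (ℕ → V)) (init : List V)
    (g : List V → Finset (List V) → List V × List V) : Prop :=
  IsP1Strategy E v₀ P α init g ∧ ∀ ρ, IsPlay E v₀ ρ → ConsP1 E P α init g ρ → ρ ∉ W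

/-- A union of cylinders, i.e. an open subset of the space of sequences. -/
def IsCylOpen (U : Set (ℕ → V)) : Prop :=
  ∃ S : Set (List V), U = ⋃ π ∈ S, Cyl π

/-- `W` is a countable intersection of open subsets of the space `Paths (G, v₀)`. -/
def IsCountableInterOfOpens (E : V → V → Prop) (v₀ : V) (W : Set (ℕ → V)) : Prop :=
  ∃ U : ℕ → Set (ℕ → V), (∀ n, IsCylOpen (U n)) ∧
    W = {ρ | IsPlay E v₀ ρ} ∩ ⋂ n, U n

/-- For every `n`, the concatenation of the blocks `u 0, …, u (n-1)` is a prefix of `ρ`. -/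
def AgreesWithBlocks (ρ : ℕ → V) (u : ℕ → List V) : Prop :=
  ∀ n, pref ρ (((List.range n).map u).flatten).length = ((List.range n).map u).flatten

end BMGame

open BMGame

section Aux

variable {V : Type*}

lemma pref_length' (ρ : ℕ → V) (n : ℕ) : (pref ρ n).length = n := by
  simp [pref]

lemma pref_take' (ρ : ℕ → V) {m n : ℕ} (h : m ≤ n) : (pref ρ n).take m = pref ρ m := by
  simp [pref, ← List.map_take, List.take_range, Nat.min_eq_left h]

lemma pref_split {ρ : ℕ → V} {n : ℕ} {L₁ L₂ : List V} (h : pref ρ n = L₁ ++ L₂) :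
    pref ρ L₁.length = L₁ := by
  have hn : L₁.length ≤ n := by
    have h' := congrArg List.length h
    simp [pref_length'] at h'
    omega
  have ht := pref_take' ρ hn
  rw [h, List.take_left] at ht
  exact ht.symm

lemma pref_succ' (ρ : ℕ → V) (m : ℕ) : pref ρ (m + 1) = pref ρ m ++ [ρ m] := by
  simp [pref, List.range_succ]

lemma pref_getLast?' (ρ : ℕ → V) {n : ℕ} (h : 1 ≤ n) :
    (pref ρ n).getLast? = some (ρ (n - 1)) := by
  obtain ⟨m, rfl⟩ : ∃ m, n = m + 1 := ⟨n - 1, by omega⟩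
  simp [pref_succ']

lemma isPos_pref {E : V → V → Prop} {v₀ : V} {ρ : ℕ → V} (hρ : IsPlay E v₀ ρ)
    {n : ℕ} (hn : 1 ≤ n) : IsPos E v₀ (pref ρ n) := by
  obtain ⟨m, rfl⟩ : ∃ m, n = m + 1 := ⟨n - 1, by omega⟩
  constructor
  · simp [pref, List.range_succ_eq_map, hρ.1]
  · simp only [pref, List.Chain', List.isChain_map]
    exact (List.isChain_range_succ _ _).2 fun k _ => hρ.2 k

lemma chain'_cons_of_append {E : V → V → Prop} {π σ : List V} {v : V}
    (h : (π ++ σ).Chain' E) (hl : π.getLast? = some v) : (v :: σ).Chain' E := by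
  simp only [List.Chain', List.isChain_append] at h
  simp only [List.Chain', List.isChain_cons]
  exact ⟨fun y hy => h.2.2 v hl y hy, h.2.1⟩

lemma chain'_append_of {E : V → V → Prop} {π σ : List V} {v : V}
    (hπ : π.Chain' E) (hσ : (v :: σ).Chain' E) (hl : π.getLast? = some v) :
    (π ++ σ).Chain' E := by
  simp only [List.Chain', List.isChain_append]
  simp only [List.Chain', List.isChain_cons] at hσ
  refine ⟨hπ, hσ.2, ?_⟩
  intro x hx y hy
  rw [hl] at hx
  obtain rfl : v = x := by simpa using hx
  exact hσ.1 y hy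

open scoped Classical in
/-- Enumeration (as a list) of all positions of length `n` ending at `v`. -/
noncomputable def enumPos (E : V → V → Prop) (v₀ : V) [Fintype V] (n : ℕ) (v : V) :
    List (List V) :=
  ((Finset.univ : Finset (Fin n → V)).toList.map List.ofFn).filter
    fun π => decide (IsPos E v₀ π ∧ π.getLast? = some v)

lemma mem_enumPos [Fintype V] {E : V → V → Prop} {v₀ : V} {n : ℕ} {v : V} {π : List V} :
    π ∈ enumPos E v₀ n v ↔ π.length = n ∧ IsPos E v₀ π ∧ π.getLast? = some v := by
  classical
  constructor
  · intro h
    rw [enumPos, List.mem_filter] at h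
    obtain ⟨hm, hp⟩ := h
    simp only [decide_eq_true_eq] at hp
    obtain ⟨g, _, rfl⟩ := List.mem_map.1 hm
    exact ⟨by simp, hp.1, hp.2⟩
  · rintro ⟨rfl, h1, h2⟩
    rw [enumPos, List.mem_filter]
    refine ⟨List.mem_map.2 ⟨π.get, by simp, List.ofFn_get π⟩, by simp [h1, h2]⟩

/-- Player 0's block, accumulated over a list of candidate histories. -/
def mkBlockAux (f : List V → List V) : List (List V) → List V → List V
  | [], B => B
  | π :: L, B => mkBlockAux f L (B ++ f (π ++ B))

lemma mkBlockAux_spec {E : V → V → Prop} {v₀ : V} {f : List V → List V}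
    (hf : IsStrategy E v₀ f) (v : V) :
    ∀ (L : List (List V)) (B : List V),
      (∀ π ∈ L, IsPos E v₀ π ∧ π.getLast? = some v) →
      (v :: B).Chain' E →
      (∃ C, mkBlockAux f L B = B ++ C ∧ (v :: (B ++ C)).Chain' E) ∧
      (∀ π ∈ L, ∃ B₁ B₂, mkBlockAux f L B = B ++ B₁ ++ f (π ++ (B ++ B₁)) ++ B₂ ∧
        f (π ++ (B ++ B₁)) ≠ []) := by
  intro L
  induction L with
  | nil =>
    intro B _ hB
    exact ⟨⟨[], by simp [mkBlockAux], by simpa using hB⟩, by simp⟩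
  | cons π L ih =>
    intro B hQ hB
    have hQπ := hQ π List.mem_cons_self
    have hπne : π ≠ [] := by
      intro h
      rw [h] at hQπ
      simp [IsPos] at hQπ
    have hπB : IsPos E v₀ (π ++ B) := by
      refine ⟨?_, chain'_append_of hQπ.1.2 hB hQπ.2⟩
      cases π with
      | nil => exact absurd rfl hπne
      | cons a t => simpa using hQπ.1.1
    obtain ⟨hne, hch⟩ := hf (π ++ B) hπB
    have hBch' : (v :: (B ++ f (π ++ B))).Chain' E := by
      rw [List.append_assoc] at hch
      exact chain'_cons_of_append hch hQπ.2
    have hQ' : ∀ τ ∈ L, IsPos E v₀ τ ∧ τ.getLast? = some v :=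
      fun τ hτ => hQ τ (List.mem_cons_of_mem _ hτ)
    obtain ⟨⟨C, hCeq, hCch⟩, hmem⟩ := ih (B ++ f (π ++ B)) hQ' hBch'
    constructor
    · refine ⟨f (π ++ B) ++ C, ?_, ?_⟩
      · simp only [mkBlockAux]
        rw [hCeq]
        simp [List.append_assoc]
      · simpa [List.append_assoc] using hCch
    · rintro τ hτ
      rcases List.mem_cons.1 hτ with rfl | hτL
      · refine ⟨[], C, ?_,
          fun hcon => hne (by rw [List.append_nil] at hcon; exact hcon)⟩
        simp only [mkBlockAux]
        rw [hCeq]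
        simp [List.append_assoc]
      · obtain ⟨B₁, B₂, heq, hne'⟩ := hmem τ hτL
        refine ⟨f (π ++ B) ++ B₁, B₂, ?_, ?_⟩
        · simp only [mkBlockAux]
          rw [heq]
          simp [List.append_assoc]
        · simpa [List.append_assoc] using hne'

open scoped Classical in
/-- The length-counting strategy built from a general strategy `f`. -/
noncomputable def mkLC [Fintype V] (E : V → V → Prop) (v₀ : V) (hE : ∀ v, ∃ u, E v u)
    (f : List V → List V) (v : V) (n : ℕ) : List V :=
  if enumPos E v₀ n v = [] then [Classical.choose (hE v)]
  else mkBlockAux f (enumPos E v₀ n v) []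

/-- A point of a play where it follows the strategy `f`. -/
def GoodPt (f : List V → List V) (ρ : ℕ → V) (m : ℕ) : Prop :=
  pref ρ (m + (f (pref ρ m)).length) = pref ρ m ++ f (pref ρ m)

lemma consGen_of_good {f : List V → List V} {ρ : ℕ → V}
    (H : ∀ N, ∃ m, N < m ∧ GoodPt f ρ m) : ConsGen f ρ := by
  choose g hg1 hg2 using H
  refine ⟨fun i => Nat.rec (g 0) (fun _ prev => g (prev + (f (pref ρ prev)).length)) i,
    ?_, fun i => ⟨?_, ?_⟩⟩
  · exact hg1 0
  · cases i with
    | zero => exact hg2 0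
    | succ j => exact hg2 _
  · exact hg1 _

end Aux

/-- Player 0 has a length-counting winning strategy for the Banach–Mazur game `(G, v₀, W)`
on a finite graph if and only if Player 0 has a winning strategy for it. -/
theorem stmt0 {V : Type*} [Fintype V] (E : V → V → Prop) (hE : ∀ v, ∃ u, E v u)
    (v₀ : V) (W : Set (ℕ → V)) (hW : W ⊆ {ρ | IsPlay E v₀ ρ}) :
    (∃ h : V → ℕ → List V, LengthCountingWinning E v₀ W h) ↔
      ∃ f : List V → List V, WinningStrategy E v₀ W f := by
  constructor
  · -- easy direction: a length-counting strategy is a strategy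
    rintro ⟨h, hIC, hwin⟩
    refine ⟨fun π => h (π.getLastD v₀) π.length, ?_, ?_⟩
    · intro π hπ
      have hπne : π ≠ [] := by
        intro hemp
        rw [hemp] at hπ
        simp [IsPos] at hπ
      obtain ⟨u, hu⟩ : ∃ u, π.getLast? = some u := by
        cases h' : π.getLast? with
        | none => exact absurd (List.getLast?_eq_none_iff.1 h') hπne
        | some u => exact ⟨u, rfl⟩
      have hD : π.getLastD v₀ = u := by rw [List.getLastD_eq_getLast?, hu]; rfl
      have hlen : 1 ≤ π.length := List.length_pos_iff.2 hπne
      obtain ⟨h1, h2⟩ := hIC u π.length hlen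
      show h (π.getLastD v₀) π.length ≠ [] ∧ (π ++ h (π.getLastD v₀) π.length).Chain' E
      rw [hD]
      exact ⟨h1, chain'_append_of hπ.2 h2 hu⟩
    · intro ρ hρ hcons
      obtain ⟨c, hc0, hc⟩ := hcons
      have hc1 : ∀ i, 1 ≤ c i := by
        intro i
        induction i with
        | zero => exact hc0
        | succ j ihj => have := (hc j).2; omega
      have key : ∀ i, (fun π => h (π.getLastD v₀) π.length) (pref ρ (c i)) =
          h (ρ (c i - 1)) (c i) := by
        intro i
        have hD : (pref ρ (c i)).getLastD v₀ = ρ (c i - 1) := by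
          rw [List.getLastD_eq_getLast?, pref_getLast?' ρ (hc1 i)]; rfl
        simp only [hD, pref_length']
      refine hwin ρ hρ ⟨c, hc0, fun i => ?_⟩
      rw [← key i]
      exact hc i
  · -- hard direction: from a winning strategy to a length-counting one
    rintro ⟨f, hst, hwin⟩
    refine ⟨mkLC E v₀ hE f, ?_, ?_⟩
    · intro v n _
      rw [mkLC]
      split_ifs with he
      · refine ⟨by simp, ?_⟩
        simp only [List.Chain', List.isChain_cons]
        refine ⟨?_, by simp⟩
        intro y hy
        simp at hy
        subst hy
        exact Classical.choose_spec (hE v)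
      · have hQ : ∀ π ∈ enumPos E v₀ n v, IsPos E v₀ π ∧ π.getLast? = some v :=
          fun π hπ => (mem_enumPos.1 hπ).2
        obtain ⟨⟨C, hCeq, hCch⟩, hmem⟩ :=
          mkBlockAux_spec hst v (enumPos E v₀ n v) [] hQ (by simp [List.Chain'])
        obtain ⟨π₀, hπ₀⟩ := List.exists_mem_of_ne_nil _ he
        obtain ⟨B₁, B₂, heq, hne⟩ := hmem π₀ hπ₀
        constructor
        · rw [heq]
          intro hcontra
          simp at hcontra
          exact hne hcontra.2.1
        · rw [hCeq]
          simpa using hCch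
    · intro ρ hρ hcons
      refine hwin ρ hρ (consGen_of_good fun N => ?_)
      obtain ⟨c, hc0, hc⟩ := hcons
      have hclb : ∀ i, i + 1 ≤ c i := by
        intro i
        induction i with
        | zero => exact hc0
        | succ j ihj => have := (hc j).2; omega
      set n := c N with hn
      have hn1 : 1 ≤ n := le_trans (by omega) (hclb N)
      set v := ρ (n - 1) with hv
      have hmemπ : pref ρ n ∈ enumPos E v₀ n v :=
        mem_enumPos.2 ⟨pref_length' ρ n, isPos_pref hρ hn1, pref_getLast?' ρ hn1⟩
      have hene : enumPos E v₀ n v ≠ [] := List.ne_nil_of_mem hmemπ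
      have hblock : mkLC E v₀ hE f v n = mkBlockAux f (enumPos E v₀ n v) [] := by
        rw [mkLC, if_neg hene]
      have hQ : ∀ π ∈ enumPos E v₀ n v, IsPos E v₀ π ∧ π.getLast? = some v :=
        fun π hπ => (mem_enumPos.1 hπ).2
      obtain ⟨_, hmem⟩ := mkBlockAux_spec hst v (enumPos E v₀ n v) [] hQ (by simp [List.Chain'])
      obtain ⟨B₁, B₂, heq, hτne⟩ := hmem (pref ρ n) hmemπ
      simp only [List.nil_append] at heq hτne
      have HC : pref ρ (n + (mkLC E v₀ hE f v n).length) =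
          pref ρ n ++ mkLC E v₀ hE f v n := (hc N).1
      rw [hblock, heq] at HC
      -- m = n + B₁.length is a good point
      set τ := f (pref ρ n ++ B₁) with hτ
      have h1 : pref ρ (pref ρ n ++ B₁).length = pref ρ n ++ B₁ := by
        apply pref_split (L₂ := τ ++ B₂)
        rw [HC]
        simp [List.append_assoc]
      have h2 : pref ρ ((pref ρ n ++ B₁) ++ τ).length = (pref ρ n ++ B₁) ++ τ := by
        apply pref_split (L₂ := B₂)
        rw [HC]
        simp [List.append_assoc]
      refine ⟨(pref ρ n ++ B₁).length, ?_, ?_⟩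
      · have : n ≤ (pref ρ n ++ B₁).length := by
          simp [pref_length']
        have := hclb N
        omega
      · show pref ρ _ = _
        rw [h1, ← hτ]
        have hlen2 : ((pref ρ n ++ B₁) ++ τ).length = (pref ρ n ++ B₁).length + τ.length := by
          simp [Nat.add_assoc]
        rw [hlen2] at h2
        exact h2
end

section
/- Let (π_n)_{n≥0} be any enumeration of all nonempty finite words over {0,1} with π₀ = 0, let ρ = π₀π₁π₂⋯ be their concatenation, and let W be the set of all sequences in {0,1}^ω starting with 0 except the single sequence ρ. In the Banach–Mazur game (G_{0,1}, 0, W), Player 0 has a 1-bounded winning strategy, but Player 0 has no move-counting winning strategy. -/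
open MeasureTheory
open scoped ENNReal NNReal

open BMGame

/-- The complete directed graph on `{0,1}` (all edges, including self-loops). -/
def E2 : Fin 2 → Fin 2 → Prop := fun _ _ => True

namespace BMAux

lemma pref_length {V : Type*} (ρ : ℕ → V) (n : ℕ) : (pref ρ n).length = n := by
  simp [pref]

lemma pref_succ {V : Type*} (ρ : ℕ → V) (n : ℕ) :
    pref ρ (n + 1) = pref ρ n ++ [ρ n] := by
  simp [pref, List.range_succ]

lemma pref_take {V : Type*} (ρ : ℕ → V) {a b : ℕ} (h : a ≤ b) :
    (pref ρ b).take a = pref ρ a := by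
  simp [pref, ← List.map_take, List.take_range, Nat.min_eq_left h]

lemma chain'_E2 (l : List (Fin 2)) : l.Chain' E2 := by
  induction l with
  | nil => exact List.isChain_nil
  | cons a t ih =>
    cases t with
    | nil => exact List.isChain_singleton a
    | cons b s => exact List.isChain_cons_cons.mpr ⟨trivial, ih⟩

lemma occ_exists (e : ℕ → List (Fin 2)) (he_inj : Function.Injective e)
    (he_ne : ∀ n, e n ≠ []) (he_surj : ∀ l : List (Fin 2), l ≠ [] → ∃ n, e n = l)
    (ρt : ℕ → Fin 2) (hρt : AgreesWithBlocks ρt e) (w : List (Fin 2)) (m : ℕ) :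
    ∃ p, m ≤ p ∧ pref ρt (p + w.length) = pref ρt p ++ w := by
  classical
  set F : ℕ → List (Fin 2) := fun n => ((List.range n).map e).flatten with hF
  have hpref : ∀ n, pref ρt (F n).length = F n := hρt
  have hFsucc : ∀ n, F (n + 1) = F n ++ e n := by
    intro n; simp [hF, List.range_succ]
  have hSge : ∀ n, n ≤ (F n).length := by
    intro n
    induction n with
    | zero => simp
    | succ k ih =>
      have h1 : 1 ≤ (e k).length := List.length_pos_iff.mpr (he_ne k)
      rw [hFsucc, List.length_append]
      omega
  have hex : ∀ k : ℕ, ∃ n, e n = w ++ List.replicate (k + 1) (0 : Fin 2) :=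
    fun k => he_surj _ (by simp)
  choose g hg using hex
  have hginj : Function.Injective g := by
    intro k k' hkk
    have h1 : e (g k) = e (g k') := by rw [hkk]
    rw [hg, hg] at h1
    have h2 := congrArg List.length h1
    simp at h2
    omega
  obtain ⟨x, hx, hmx⟩ := (Set.infinite_range_of_injective hginj).exists_gt m
  obtain ⟨k, rfl⟩ := hx
  set n := g k with hn
  refine ⟨(F n).length, le_trans (le_of_lt hmx) (hSge _), ?_⟩
  have key : pref ρt ((F n).length + (e n).length) = pref ρt (F n).length ++ e n := by
    have h1 := hpref (n + 1)
    rw [hFsucc n, List.length_append] at h1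
    rw [h1, hpref n]
  have hw : e n = w ++ List.replicate (k + 1) 0 := hg k
  have hle : (F n).length + w.length ≤ (F n).length + (e n).length := by
    rw [hw, List.length_append]; omega
  have ht := congrArg (List.take ((F n).length + w.length)) key
  rw [pref_take ρt hle] at ht
  rw [ht, hw, ← List.append_assoc,
    List.take_left' (by rw [List.length_append, pref_length])]

end BMAux

open BMAux

/-- For any enumeration `e` of the nonempty finite words over `{0,1}` with `e 0 = [0]`,
and `ρt` the concatenation `e 0 · e 1 · e 2 ⋯`, in the game whose winning condition is
the set of sequences starting with `0` other than `ρt`, Player 0 has a `1`-bounded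
winning strategy but no move-counting winning strategy. -/
theorem stmt2 (e : ℕ → List (Fin 2)) (he_inj : Function.Injective e)
    (he_ne : ∀ n, e n ≠ []) (he_surj : ∀ l : List (Fin 2), l ≠ [] → ∃ n, e n = l)
    (he0 : e 0 = [0]) (ρt : ℕ → Fin 2) (hρt : AgreesWithBlocks ρt e) :
    (∃ f : List (Fin 2) → List (Fin 2),
        WinningStrategy E2 0 {σ | σ 0 = 0 ∧ σ ≠ ρt} f ∧ BoundedBy E2 0 1 f) ∧
    ¬ ∃ h : Fin 2 → ℕ → List (Fin 2), MoveCountingWinning E2 0 {σ | σ 0 = 0 ∧ σ ≠ ρt} h := by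
  classical
  constructor
  · -- Part 1: a 1-bounded winning strategy
    refine ⟨fun π => [if ρt π.length = 0 then 1 else 0], ⟨?_, ?_⟩, ?_⟩
    · intro π hπ
      exact ⟨by simp, chain'_E2 _⟩
    · rintro ρ hplay ⟨c, hc0, hci⟩
      refine ⟨hplay.1, ?_⟩
      intro hρ
      obtain ⟨h1, _⟩ := hci 0
      simp only [List.length_cons, List.length_nil] at h1
      rw [pref_succ, pref_length] at h1
      have h2 : ρ (c 0) = if ρt (c 0) = 0 then 1 else 0 := by
        simpa using List.append_cancel_left h1
      rw [hρ] at h2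
      have h3 : ∀ a : Fin 2, a ≠ (if a = 0 then 1 else 0) := by decide
      exact h3 (ρt (c 0)) h2
    · intro π hπ
      simp
  · -- Part 2: no move-counting winning strategy
    rintro ⟨h, hstrat, hwin⟩
    have hρ0 : ρt 0 = 0 := by
      have h1 := hρt 1
      simp only [List.range_succ, List.range_zero, List.map_append, List.map_cons,
        List.map_nil, List.flatten_append, List.flatten_cons, List.flatten_nil,
        List.nil_append, List.append_nil, he0] at h1
      rw [show ([ (0 : Fin 2) ] : List (Fin 2)).length = 0 + 1 from rfl, pref_succ] at h1
      simpa [pref] using h1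
    have hplay : IsPlay E2 0 ρt := ⟨hρ0, fun n => trivial⟩
    have hocc := occ_exists e he_inj he_ne he_surj ρt hρt
    set wd : ℕ → List (Fin 2) := fun i => (0 : Fin 2) :: h 0 (i + 1) with hwd
    set occ : ℕ → ℕ → ℕ := fun i m => (hocc (wd i) m).choose with hoccdef
    have occ_ge : ∀ i m, m ≤ occ i m := fun i m => (hocc (wd i) m).choose_spec.1
    have occ_spec : ∀ i m,
        pref ρt (occ i m + (wd i).length) = pref ρt (occ i m) ++ wd i :=
      fun i m => (hocc (wd i) m).choose_spec.2
    have step : ∀ i m, ρt (occ i m) = 0 ∧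
        pref ρt ((occ i m + 1) + (h 0 (i + 1)).length)
          = pref ρt (occ i m + 1) ++ h 0 (i + 1) := by
      intro i m
      have hs := occ_spec i m
      set p := occ i m with hp
      have hlen : (wd i).length = (h 0 (i + 1)).length + 1 := by simp [hwd]
      have hsplit : pref ρt p ++ wd i = (pref ρt p ++ [0]) ++ h 0 (i + 1) := by
        simp [hwd]
      have h0 : ρt p = 0 := by
        have ht := congrArg (List.take (p + 1)) hs
        rw [pref_take ρt (by omega : p + 1 ≤ p + (wd i).length)] at ht
        rw [hsplit, List.take_left' (by rw [List.length_append, pref_length]; rfl)] at ht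
        rw [pref_succ] at ht
        simpa using List.append_cancel_left ht
      refine ⟨h0, ?_⟩
      have heq : p + (wd i).length = (p + 1) + (h 0 (i + 1)).length := by omega
      rw [heq] at hs
      rw [hs, hsplit, pref_succ, h0]
    set c : ℕ → ℕ := fun i => Nat.rec (occ 0 1 + 1)
      (fun i ci => occ (i + 1) (ci + (h (ρt (ci - 1)) (i + 1)).length + 1) + 1) i with hcdef
    have hc0 : c 0 = occ 0 1 + 1 := rfl
    have hcs : ∀ i, c (i + 1)
        = occ (i + 1) (c i + (h (ρt (c i - 1)) (i + 1)).length + 1) + 1 := fun i => rfl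
    have hform : ∀ i, ∃ m, c i = occ i m + 1 := by
      intro i
      cases i with
      | zero => exact ⟨1, rfl⟩
      | succ j => exact ⟨_, hcs j⟩
    have hcons : ConsMoveCounting h ρt := by
      refine ⟨c, by rw [hc0]; omega, ?_⟩
      intro i
      obtain ⟨m, hm⟩ := hform i
      have hst := step i m
      have hci1 : ρt (c i - 1) = 0 := by
        rw [hm]
        simpa using hst.1
      constructor
      · rw [hci1, hm]
        exact hst.2
      · rw [hcs i]
        have := occ_ge (i + 1) (c i + (h (ρt (c i - 1)) (i + 1)).length + 1)
        omega
    exact (hwin ρt hplay hcons).2 rfl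
end

section
/- Let W = {w₀w₀^R w₁w₁^R w₂w₂^R ⋯ : each wᵢ is a nonempty finite word over {0,1,2}} ∩ Paths(G_{0,1,2}, 2), where σ^R denotes the reverse of the finite word σ, and let P be the reasonable probability measure on Paths(G_{0,1,2},2) given by the weights w_e = 1 for every edge e (so each step is uniform over the 3 successors). Then P(W) = 0, i.e., W is P-null. -/
open MeasureTheory
open scoped ENNReal NNReal

open BMGame

/-- The complete directed graph on `{0,1,2}` (all edges, including self-loops). -/
def E3 : Fin 3 → Fin 3 → Prop := fun _ _ => True

/-- The set of infinite paths from `2` in `G_{0,1,2}` of the form `w₀w₀ᴿw₁w₁ᴿw₂w₂ᴿ⋯`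
with each `wᵢ` a nonempty finite word over `{0,1,2}`. -/
def W3 : Set (ℕ → Fin 3) :=
  {ρ | IsPlay E3 2 ρ ∧ ∃ w : ℕ → List (Fin 3), (∀ i, w i ≠ []) ∧
    AgreesWithBlocks ρ fun i => w i ++ (w i).reverse}

namespace Stmt4Aux

theorem ofFn_comp_val (m : ℕ) {α : Type*} (u : ℕ → α) :
    (List.ofFn (fun i : Fin m => u i)) = (List.range m).map u := by
  rw [List.ofFn_eq_map, ← List.map_coe_finRange_eq_range, List.map_map]; rfl

theorem ofFn_get' {α : Type*} (l : List α) (n : ℕ) (h : n = l.length) :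
    List.ofFn (fun j : Fin n => l.get (Fin.cast h j)) = l := by
  subst h; exact List.ofFn_get l

/-- The candidate word `w₀w₀ᴿ⋯w_{m-1}w_{m-1}ᴿ` built from the seed `g`,
where `w i = List.ofFn (g i)` has length `k i + 1`. -/
def bw {m : ℕ} (k : Fin m → ℕ) (g : ∀ i, Fin (k i + 1) → Fin 3) : List (Fin 3) :=
  (List.ofFn (fun i => List.ofFn (g i) ++ (List.ofFn (g i)).reverse)).flatten

lemma bw_length {m : ℕ} (k : Fin m → ℕ) (g : ∀ i, Fin (k i + 1) → Fin 3) :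
    (bw k g).length = ∑ i, 2 * (k i + 1) := by
  simp [bw, List.length_flatten, Function.comp_def, List.sum_ofFn, two_mul]
  exact Finset.sum_congr rfl fun i _ => by omega

/-- The covering event: some choice of `m` block half-lengths and seeds matches `ρ`. -/
def Cover (m : ℕ) : Set (ℕ → Fin 3) :=
  ⋃ p : Σ k : Fin m → ℕ, ∀ i, Fin (k i + 1) → Fin 3,
    (Cyl (bw p.1 p.2) ∩ {ρ | ρ 0 = 2})

lemma W3_subset_Cover (m : ℕ) : W3 ⊆ Cover m := by
  rintro ρ ⟨hplay, w, hw, ha⟩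
  have h0 : ρ 0 = 2 := hplay.1
  have hlen : ∀ i : Fin m, ((w i).length - 1) + 1 = (w i).length := fun i =>
    Nat.succ_pred_eq_of_pos (List.length_pos_iff.mpr (hw i))
  refine Set.mem_iUnion.mpr ⟨⟨fun i => (w i).length - 1,
    fun i => fun j => (w i).get (Fin.cast (hlen i) j)⟩, ?_, h0⟩
  have hbw : bw (fun i : Fin m => (w i).length - 1)
      (fun i => fun j => (w i).get (Fin.cast (hlen i) j)) =
      ((List.range m).map (fun i => w i ++ (w i).reverse)).flatten := by
    rw [bw]
    congr 1
    rw [← ofFn_comp_val m (fun i => w i ++ (w i).reverse)]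
    congr 1
    funext i
    rw [ofFn_get' (w i) _ (hlen i)]
  show pref ρ _ = _
  rw [hbw]
  exact ha m

lemma transP_eq (u v : Fin 3) : transP E3 (fun _ _ => 1) u v = 3⁻¹ := by
  have hf : ∀ x, E3 u x := fun _ => trivial
  simp [transP, hf]

lemma pathP_eq (π : List (Fin 3)) : pathP E3 (fun _ _ => 1) π = 3⁻¹ ^ (π.length - 1) := by
  have h : ∀ q : Fin 3 × Fin 3, transP E3 (fun _ _ => 1) q.1 q.2 = 3⁻¹ :=
    fun q => transP_eq q.1 q.2
  rw [pathP, List.map_congr_left (fun q _ => h q), List.map_const', List.prod_replicate,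
    List.length_zip, List.length_tail]
  congr 1
  omega

lemma three_mul_inv : (3 : ℝ≥0∞) * 3⁻¹ = 1 :=
  ENNReal.mul_inv_cancel (by norm_num) (by norm_num)

lemma inv_pow_pred_le (L : ℕ) : (3⁻¹ : ℝ≥0∞) ^ (L - 1) ≤ 3 * 3⁻¹ ^ L := by
  cases L with
  | zero => norm_num
  | succ n =>
      have : (3 : ℝ≥0∞) * 3⁻¹ ^ (n + 1) = 3⁻¹ ^ n := by
        rw [pow_succ', ← mul_assoc, three_mul_inv, one_mul]
      rw [Nat.succ_sub_one, this]

lemma piece_le (P : MeasureTheory.Measure (ℕ → Fin 3))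
    (hP : IsReasonable E3 2 (fun _ _ => 1) P)
    {m : ℕ} (hm : 1 ≤ m) (k : Fin m → ℕ) (g : ∀ i, Fin (k i + 1) → Fin 3) :
    P (Cyl (bw k g) ∩ {ρ | ρ 0 = 2}) ≤ 3 * 3⁻¹ ^ (bw k g).length := by
  rcases Set.eq_empty_or_nonempty (Cyl (bw k g) ∩ {ρ | ρ 0 = 2}) with h | ⟨ρ, hρ, h0⟩
  · rw [h]; simp
  · have hL : (bw k g).length ≠ 0 := by
      have : Nonempty (Fin m) := ⟨⟨0, hm⟩⟩
      rw [bw_length]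
      have hpos : 0 < ∑ i, 2 * (k i + 1) :=
        Finset.sum_pos (fun i _ => by omega) Finset.univ_nonempty
      omega
    obtain ⟨n, hn⟩ := Nat.exists_eq_succ_of_ne_zero hL
    have hhead : (bw k g).head? = some 2 := by
      have hpref : pref ρ (bw k g).length = bw k g := hρ
      rw [← hpref, hn]
      simp only [pref, List.range_succ_eq_map, List.map_cons, List.head?_cons]
      exact congrArg some h0
    calc P (Cyl (bw k g) ∩ {ρ | ρ 0 = 2}) ≤ P (Cyl (bw k g)) :=
          measure_mono Set.inter_subset_left
      _ = pathP E3 (fun _ _ => 1) (bw k g) := hP.2 _ hhead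
      _ = 3⁻¹ ^ ((bw k g).length - 1) := pathP_eq _
      _ ≤ 3 * 3⁻¹ ^ (bw k g).length := inv_pow_pred_le _

lemma geom_le : ∑' n : ℕ, (3⁻¹ : ℝ≥0∞) ^ (n + 1) ≤ 2 * 3⁻¹ := by
  calc ∑' n : ℕ, (3⁻¹ : ℝ≥0∞) ^ (n + 1) = 3⁻¹ * ∑' n : ℕ, (3⁻¹ : ℝ≥0∞) ^ n := by
        rw [← ENNReal.tsum_mul_left]
        exact tsum_congr fun n => (pow_succ' _ _)
    _ ≤ 3⁻¹ * ∑' n : ℕ, (2⁻¹ : ℝ≥0∞) ^ n := by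
        gcongr
        norm_num
    _ = 3⁻¹ * 2 := by
        rw [ENNReal.tsum_geometric, ENNReal.one_sub_inv_two, inv_inv]
    _ = 2 * 3⁻¹ := mul_comm _ _

lemma T_le (m : ℕ) :
    ∑' k : Fin m → ℕ, ∏ i, (3⁻¹ : ℝ≥0∞) ^ (k i + 1) ≤ (2 * 3⁻¹) ^ m := by
  induction m with
  | zero =>
      rw [tsum_eq_single (fun _ => 0) (fun b hb => absurd (Subsingleton.elim b _) hb)]
      simp
  | succ m ih =>
      have he := (Fin.consEquiv (fun _ : Fin (m + 1) => ℕ)).tsum_eq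
        (fun k => ∏ i, (3⁻¹ : ℝ≥0∞) ^ (k i + 1))
      rw [← he]
      have : ∀ p : ℕ × (Fin m → ℕ),
          (∏ i, (3⁻¹ : ℝ≥0∞) ^ ((Fin.consEquiv (fun _ : Fin (m+1) => ℕ)) p i + 1)) =
          (3⁻¹ : ℝ≥0∞) ^ (p.1 + 1) * ∏ i, (3⁻¹ : ℝ≥0∞) ^ (p.2 i + 1) := by
        intro p
        rw [Fin.prod_univ_succ]
        simp [Fin.consEquiv]
      rw [tsum_congr this,
        ENNReal.tsum_prod (f := fun (a : ℕ) (b : Fin m → ℕ) =>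
          (3⁻¹ : ℝ≥0∞) ^ (a + 1) * ∏ i, (3⁻¹ : ℝ≥0∞) ^ (b i + 1))]
      calc ∑' (a : ℕ) (b : Fin m → ℕ),
            (3⁻¹ : ℝ≥0∞) ^ (a + 1) * ∏ i, (3⁻¹ : ℝ≥0∞) ^ (b i + 1)
          = (∑' a : ℕ, (3⁻¹ : ℝ≥0∞) ^ (a + 1)) *
            ∑' b : Fin m → ℕ, ∏ i, (3⁻¹ : ℝ≥0∞) ^ (b i + 1) := by
            rw [← ENNReal.tsum_mul_right]
            exact tsum_congr fun a => ENNReal.tsum_mul_left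
        _ ≤ (2 * 3⁻¹) * (2 * 3⁻¹) ^ m := mul_le_mul' geom_le ih
        _ = (2 * 3⁻¹) ^ (m + 1) := (pow_succ' _ _).symm

lemma card_pow (k : ℕ) : ((3 : ℝ≥0∞) ^ k) * (3⁻¹ : ℝ≥0∞) ^ (2 * k) = 3⁻¹ ^ k := by
  rw [two_mul, pow_add, ← mul_assoc, ← mul_pow, three_mul_inv, one_pow, one_mul]

lemma cover_le (P : MeasureTheory.Measure (ℕ → Fin 3))
    (hP : IsReasonable E3 2 (fun _ _ => 1) P) {m : ℕ} (hm : 1 ≤ m) :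
    P (Cover m) ≤ 3 * (2 * 3⁻¹) ^ m := by
  calc P (Cover m)
      ≤ ∑' p : Σ k : Fin m → ℕ, ∀ i, Fin (k i + 1) → Fin 3,
          P (Cyl (bw p.1 p.2) ∩ {ρ | ρ 0 = 2}) := measure_iUnion_le _
    _ ≤ ∑' p : Σ k : Fin m → ℕ, ∀ i, Fin (k i + 1) → Fin 3,
          3 * 3⁻¹ ^ (bw p.1 p.2).length :=
        ENNReal.tsum_le_tsum fun p => piece_le P hP hm p.1 p.2
    _ = ∑' k : Fin m → ℕ, ∑' _g : ∀ i, Fin (k i + 1) → Fin 3,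
          3 * (3⁻¹ : ℝ≥0∞) ^ (∑ i, 2 * (k i + 1)) := by
        rw [ENNReal.tsum_sigma
          (f := fun (k : Fin m → ℕ) (g : ∀ i, Fin (k i + 1) → Fin 3) =>
            3 * (3⁻¹ : ℝ≥0∞) ^ (bw k g).length)]
        exact tsum_congr fun k => tsum_congr fun g => by rw [bw_length]
    _ = ∑' k : Fin m → ℕ, 3 * ∏ i, (3⁻¹ : ℝ≥0∞) ^ (k i + 1) := by
        refine tsum_congr fun k => ?_
        rw [tsum_fintype, Finset.sum_const, nsmul_eq_mul]
        have hcard : (Fintype.card (∀ i, Fin (k i + 1) → Fin 3) : ℝ≥0∞) =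
            ∏ i, (3 : ℝ≥0∞) ^ (k i + 1) := by
          rw [Fintype.card_pi, Nat.cast_prod]
          refine Finset.prod_congr rfl fun i _ => ?_
          rw [Fintype.card_fun, Fintype.card_fin, Fintype.card_fin, Nat.cast_pow]
          norm_num
        rw [Finset.card_univ, hcard]
        rw [← Finset.prod_pow_eq_pow_sum, ← mul_assoc, mul_comm _ (3:ℝ≥0∞), mul_assoc,
          ← Finset.prod_mul_distrib]
        congr 1
        exact Finset.prod_congr rfl fun i _ => card_pow _
    _ = 3 * ∑' k : Fin m → ℕ, ∏ i, (3⁻¹ : ℝ≥0∞) ^ (k i + 1) := ENNReal.tsum_mul_left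
    _ ≤ 3 * (2 * 3⁻¹) ^ m := mul_le_mul' le_rfl (T_le m)

end Stmt4Aux

/-- For the reasonable probability measure given by uniform weights on `G_{0,1,2}`,
the set `W3` is null. -/
theorem stmt4 (P : MeasureTheory.Measure (ℕ → Fin 3))
    (hP : IsReasonable E3 2 (fun _ _ => 1) P) :
    P W3 = 0 := by
  have key : ∀ m : ℕ, P W3 ≤ 3 * (2 * 3⁻¹ : ℝ≥0∞) ^ (m + 1) := fun m =>
    (measure_mono (Stmt4Aux.W3_subset_Cover (m + 1))).trans
      (Stmt4Aux.cover_le P hP (by omega))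
  have hlt : (2 * 3⁻¹ : ℝ≥0∞) < 1 := by
    rw [← Stmt4Aux.three_mul_inv]
    exact ENNReal.mul_lt_mul_left (a := 3⁻¹) (by norm_num) (by norm_num) (by norm_num)
  have htend : Filter.Tendsto (fun m : ℕ => 3 * (2 * 3⁻¹ : ℝ≥0∞) ^ (m + 1))
      Filter.atTop (nhds 0) := by
    have h1 := ENNReal.tendsto_pow_atTop_nhds_zero_of_lt_one hlt
    have h2 : Filter.Tendsto (fun m : ℕ => (2 * 3⁻¹ : ℝ≥0∞) ^ (m + 1))
        Filter.atTop (nhds 0) := h1.comp (Filter.tendsto_add_atTop_nat 1)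
    simpa using ENNReal.Tendsto.const_mul h2 (Or.inr (by norm_num))
  exact le_antisymm (ge_of_tendsto' htend key) (zero_le)
end

section
/- Let a_n = Σ_{k=1}^n k = n(n+1)/2 and let W = {(σ_k)_{k≥1} ∈ {0,1}^ω : σ₁ = 0 and σ_{a_n} = 1 for some n > 1}. In the Banach–Mazur game (G_{0,1}, 0, W), Player 0 has no positional winning strategy, no bounded winning strategy, and no move-counting winning strategy. -/
open MeasureTheory
open scoped ENNReal NNReal

open BMGame

/-- With `a n = 1 + 2 + ⋯ + n = n (n + 1) / 2`, the set of sequences over `{0,1}` with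
`σ₁ = 0` and `σ_{a n} = 1` for some `n > 1` (sequences are `0`-indexed, `σ_i = ρ (i - 1)`). -/
def W5 : Set (ℕ → Fin 2) :=
  {ρ | ρ 0 = 0 ∧ ∃ n : ℕ, 1 < n ∧ ρ (n * (n + 1) / 2 - 1) = 1}

namespace Stmt6Aux

open BMGame

/-- Triangular number. -/
def S (k : ℕ) : ℕ := k * (k + 1) / 2

lemma S_succ (k : ℕ) : S (k + 1) = S k + (k + 1) := by
  have he : k * (k + 1) % 2 = 0 := Nat.even_iff.mp (Nat.even_mul_succ_self k)
  have h : (k + 1) * (k + 1 + 1) = k * (k + 1) + 2 * (k + 1) := by ring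
  simp only [S]
  omega

lemma S_mono {n k : ℕ} (h : n ≤ k) : S n ≤ S k :=
  Nat.div_le_div_right (Nat.mul_le_mul (by omega) (by omega))

lemma le_S {k : ℕ} (h : 1 ≤ k) : k ≤ S k := by
  have : k * 2 ≤ k * (k + 1) := Nat.mul_le_mul_left _ (by omega)
  simp only [S]
  omega

def padTo (l : List (Fin 2)) (m : ℕ) : List (Fin 2) :=
  l ++ List.replicate (m - l.length) 0

lemma padTo_length {l : List (Fin 2)} {m : ℕ} (h : l.length ≤ m) :
    (padTo l m).length = m := by
  simp [padTo]; omega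

lemma prefix_padTo (l : List (Fin 2)) (m : ℕ) : l <+: padTo l m :=
  ⟨_, rfl⟩

lemma getD_replicate_zero (n m : ℕ) : (List.replicate n (0 : Fin 2)).getD m 0 = 0 := by
  induction n generalizing m with
  | zero => simp [List.getD]
  | succ n ih =>
    cases m with
    | zero => simp [List.replicate, List.getD]
    | succ m => simpa [List.replicate, List.getD] using ih m

lemma getD_prefix {l₁ l₂ : List (Fin 2)} (h : l₁ <+: l₂) {n : ℕ} (hn : n < l₁.length) :
    l₂.getD n 0 = l₁.getD n 0 := by
  obtain ⟨t, rfl⟩ := h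
  rw [List.getD_eq_getElem _ _ hn,
    List.getD_eq_getElem _ _ (by simp; omega), List.getElem_append_left hn]

variable (M : ℕ → List (Fin 2) → List (Fin 2)) (B : ℕ → ℕ)

/-- `A i` is the play prefix after `i` full rounds. -/
def A : ℕ → List (Fin 2)
  | 0 => [0]
  | i + 1 =>
      let k := max (B i + 2) ((A i).length + 2)
      let P := padTo (A i) (S k)
      P ++ M i P

def kk (i : ℕ) : ℕ := max (B i + 2) ((A M B i).length + 2)

def cc (i : ℕ) : ℕ := S (kk M B i)

def PP (i : ℕ) : List (Fin 2) := padTo (A M B i) (cc M B i)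

lemma A_succ (i : ℕ) : A M B (i + 1) = PP M B i ++ M i (PP M B i) := rfl

lemma len_A_lt (i : ℕ) : (A M B i).length + 2 ≤ cc M B i := by
  have h1 : (A M B i).length + 2 ≤ kk M B i := le_max_right _ _
  have h2 : kk M B i ≤ S (kk M B i) := le_S (by omega)
  simpa [cc] using le_trans h1 h2

lemma PP_length (i : ℕ) : (PP M B i).length = cc M B i :=
  padTo_length (by have := len_A_lt M B i; omega)

lemma cc_le_len_succ (i : ℕ) : cc M B i ≤ (A M B (i + 1)).length := by
  rw [A_succ]; simp [PP_length]

lemma A_prefix_succ (i : ℕ) : A M B i <+: A M B (i + 1) := by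
  rw [A_succ]
  exact (prefix_padTo _ _).trans ⟨_, rfl⟩

lemma A_prefix {i j : ℕ} (h : i ≤ j) : A M B i <+: A M B j := by
  induction j with
  | zero => simpa [Nat.le_zero.mp h]
  | succ j ih =>
    rcases Nat.lt_or_ge i (j + 1) with h' | h'
    · exact (ih (by omega)).trans (A_prefix_succ M B j)
    · have : i = j + 1 := by omega
      simp [this]

lemma A_len (i : ℕ) : i + 1 ≤ (A M B i).length := by
  induction i with
  | zero => simp [A]
  | succ i ih =>
    have h1 := len_A_lt M B i
    have h2 := cc_le_len_succ M B i
    omega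

lemma PP_prefix (i : ℕ) : PP M B i <+: A M B (i + 1) := by
  rw [A_succ]; exact ⟨_, rfl⟩

lemma A_head (i : ℕ) : ∃ t, A M B i = 0 :: t := by
  obtain ⟨t, ht⟩ := A_prefix M B (Nat.zero_le i)
  exact ⟨t, by simpa [A] using ht.symm⟩

/-- The spoiling play. -/
def rho (n : ℕ) : Fin 2 := (A M B (n + 1)).getD n 0

lemma rho_eq {j n : ℕ} (hn : n < (A M B j).length) :
    rho M B n = (A M B j).getD n 0 := by
  unfold rho
  rcases Nat.le_total j (n + 1) with h | h
  · exact getD_prefix (A_prefix M B h) hn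
  · have hn' : n < (A M B (n + 1)).length := by have := A_len M B (n + 1); omega
    exact (getD_prefix (A_prefix M B h) hn').symm

lemma pref_eq {j m : ℕ} (hm : m ≤ (A M B j).length) :
    pref (rho M B) m = (A M B j).take m := by
  apply List.ext_getElem
  · simp [pref]; omega
  · intro n h1 h2
    have hn : n < m := by simpa [pref] using h1
    have hn' : n < (A M B j).length := by omega
    simp only [pref, List.getElem_map, List.getElem_range, List.getElem_take]
    rw [rho_eq M B hn', List.getD_eq_getElem _ _ hn']

variable (hB : ∀ i π, π.head? = some 0 → (M i π).length ≤ B i)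

include hB

lemma PP_head (i : ℕ) : (PP M B i).head? = some 0 := by
  obtain ⟨t, ht⟩ := A_head M B i
  simp [PP, padTo, ht]

lemma M_len (i : ℕ) : (M i (PP M B i)).length ≤ B i := hB i _ (PP_head M B hB i)

/-- Triangular positions carry `0` in every `A i`. -/
lemma Z (i : ℕ) : ∀ m, m < (A M B i).length → ∀ n, 1 ≤ n → m = n * (n + 1) / 2 - 1 →
    (A M B i).getD m 0 = 0 := by
  induction i with
  | zero =>
    intro m hm n hn he
    have hm0 : m = 0 := by simp [A] at hm; omega
    subst hm0
    rfl
  | succ i ih =>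
    intro m hm n hn he
    rcases Nat.lt_or_ge m (A M B i).length with h1 | h1
    · rw [getD_prefix (A_prefix_succ M B i) h1]
      exact ih m h1 n hn he
    rcases Nat.lt_or_ge m (cc M B i) with h2 | h2
    · -- in the replicate padding region
      have hpp : m < (PP M B i).length := by rw [PP_length]; exact h2
      rw [getD_prefix (PP_prefix M B i) hpp]
      have hlen := len_A_lt M B i
      simp only [PP, padTo]
      rw [List.getD_eq_getElem _ _ (by simp; omega),
        List.getElem_append_right h1]
      simp
    · -- inside player 0's move: impossible, no triangular index there
      exfalso
      have hcc : cc M B i = S (kk M B i) := rfl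
      have hmlt : m < cc M B i + (M i (PP M B i)).length := by
        have h' := hm
        rw [A_succ] at h'
        simpa [PP_length] using h'
      have hMB := M_len M B hB i
      have hBk : B i + 2 ≤ kk M B i := le_max_left _ _
      have he' : m = S n - 1 := he
      have hSn1 : 1 ≤ S n := le_trans hn (le_S hn)
      have hSk : kk M B i ≤ S (kk M B i) := le_S (by omega)
      have hSn : S (kk M B i) < S n := by omega
      have hnk : kk M B i + 1 ≤ n := by
        by_contra hc
        exact absurd (S_mono (show n ≤ kk M B i by omega)) (by omega)
      have hfin : S (kk M B i) + (kk M B i + 1) ≤ S n := by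
        have := S_mono hnk
        rw [S_succ] at this
        exact this
      omega

lemma rho_triangular {n : ℕ} (hn : 1 ≤ n) : rho M B (n * (n + 1) / 2 - 1) = 0 := by
  set m := n * (n + 1) / 2 - 1 with hm
  have h : m < (A M B (m + 1)).length := by have := A_len M B (m + 1); omega
  rw [rho_eq M B h]
  exact Z M B hB (m + 1) m h n hn rfl

lemma main :
    IsPlay E2 0 (rho M B) ∧ (rho M B) ∉ W5 ∧ 1 ≤ cc M B 0 ∧ ∀ i,
      rho M B (cc M B i - 1) = 0 ∧
      pref (rho M B) (cc M B i) = PP M B i ∧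
      pref (rho M B) (cc M B i + (M i (PP M B i)).length)
        = PP M B i ++ M i (PP M B i) ∧
      cc M B i + (M i (PP M B i)).length < cc M B (i + 1) := by
  refine ⟨⟨?_, fun n => trivial⟩, ?_, ?_, fun i => ⟨?_, ?_, ?_, ?_⟩⟩
  · simpa using rho_triangular M B hB (n := 1) le_rfl
  · rintro ⟨-, n, hn, h1⟩
    rw [rho_triangular M B hB (by omega)] at h1
    exact absurd h1 (by decide)
  · have := len_A_lt M B 0; omega
  · -- rho (cc i - 1) = 0 : index S (kk i) - 1 is triangular with n = kk i
    have h2k : 2 ≤ kk M B i := le_trans (by omega) (le_max_left _ _)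
    have : cc M B i - 1 = kk M B i * (kk M B i + 1) / 2 - 1 := rfl
    rw [this]
    exact rho_triangular M B hB (by omega)
  · rw [pref_eq M B (j := i + 1) (le_trans (cc_le_len_succ M B i) le_rfl)]
    rw [(List.prefix_iff_eq_take.mp (PP_prefix M B i)), PP_length]
  · have hlen : cc M B i + (M i (PP M B i)).length = (A M B (i + 1)).length := by
      rw [A_succ]; simp [PP_length]
    rw [hlen, pref_eq M B (j := i + 1) le_rfl, List.take_length, A_succ]
  · have hlen : cc M B i + (M i (PP M B i)).length = (A M B (i + 1)).length := by
      rw [A_succ]; simp [PP_length]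
    have := len_A_lt M B (i + 1)
    omega

end Stmt6Aux


lemma chainE2 (l : List (Fin 2)) : l.Chain' E2 := by
  induction l with
  | nil => exact List.IsChain.nil
  | cons a l ih =>
    cases l with
    | nil => exact List.IsChain.singleton _
    | cons b t => exact List.IsChain.cons_cons trivial ih

/-- In the Banach–Mazur game `(G_{0,1}, 0, W5)`, Player 0 has no positional winning
strategy, no bounded winning strategy, and no move-counting winning strategy. -/
theorem stmt6 :
    (¬ ∃ f : Fin 2 → List (Fin 2), PositionalWinning E2 0 W5 f) ∧
    (¬ ∃ (f : List (Fin 2) → List (Fin 2)) (b : ℕ), 1 ≤ b ∧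
        WinningStrategy E2 0 W5 f ∧ BoundedBy E2 0 b f) ∧
    (¬ ∃ h : Fin 2 → ℕ → List (Fin 2), MoveCountingWinning E2 0 W5 h) := by
  refine ⟨?_, ?_, ?_⟩
  · rintro ⟨f, hpos, hwin⟩
    obtain ⟨hplay, hW, hc0, hmoves⟩ :=
      Stmt6Aux.main (fun _ _ => f 0) (fun _ => (f 0).length) (fun _ _ _ => le_rfl)
    refine hW (hwin _ hplay ⟨Stmt6Aux.cc (fun _ _ => f 0) (fun _ => (f 0).length), hc0,
      fun i => ?_⟩)
    obtain ⟨h0, hpr, heq, hlt⟩ := hmoves i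
    rw [h0, hpr]
    exact ⟨heq, hlt⟩
  · rintro ⟨f, b, -, ⟨-, hwin⟩, hbound⟩
    obtain ⟨hplay, hW, hc0, hmoves⟩ :=
      Stmt6Aux.main (fun _ π => f π) (fun _ => b)
        (fun i π hh => hbound π ⟨hh, chainE2 π⟩)
    refine hW (hwin _ hplay ⟨Stmt6Aux.cc (fun _ π => f π) (fun _ => b), hc0, fun i => ?_⟩)
    obtain ⟨h0, hpr, heq, hlt⟩ := hmoves i
    rw [hpr]
    exact ⟨heq, hlt⟩
  · rintro ⟨h, hcnt, hwin⟩
    obtain ⟨hplay, hW, hc0, hmoves⟩ :=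
      Stmt6Aux.main (fun i _ => h 0 (i + 1)) (fun i => (h 0 (i + 1)).length)
        (fun _ _ _ => le_rfl)
    refine hW (hwin _ hplay ⟨Stmt6Aux.cc (fun i _ => h 0 (i + 1))
      (fun i => (h 0 (i + 1)).length), hc0, fun i => ?_⟩)
    obtain ⟨h0, hpr, heq, hlt⟩ := hmoves i
    rw [h0, hpr]
    exact ⟨heq, hlt⟩
end

section
/- Let G=(V,E) be a finite directed graph in which every vertex has at least one outgoing edge, v₀ ∈ V, and let (W_n)_{n≥1} be a sequence of subsets of Paths(G,v₀). If for every n ≥ 1 Player 0 has a positional winning strategy for the Banach–Mazur game (G,v₀,W_n), then Player 0 has a move-counting winning strategy for the Banach–Mazur game (G,v₀,⋂_{n≥1} W_n). -/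
open MeasureTheory
open scoped ENNReal NNReal

open BMGame

/-- If Player 0 has a positional winning strategy for each game `(G, v₀, W n)` on a
finite graph, then Player 0 has a move-counting winning strategy for `(G, v₀, ⋂ n, W n)`. -/
theorem stmt8 {V : Type*} [Fintype V] (E : V → V → Prop) (hE : ∀ v, ∃ u, E v u) (v₀ : V)
    (W : ℕ → Set (ℕ → V)) (hW : ∀ n, W n ⊆ {ρ | IsPlay E v₀ ρ})
    (hpos : ∀ n, ∃ f : V → List V, PositionalWinning E v₀ (W n) f) :
    ∃ h : V → ℕ → List V, MoveCountingWinning E v₀ (⋂ n, W n) h := by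
  classical
  choose f hf using hpos
  refine ⟨fun v i => f (Nat.unpair i).1 v, ?_, ?_⟩
  · intro v n _
    exact (hf _).1 v
  · rintro ρ hplay ⟨c, hc0, hc⟩
    have hmono : StrictMono c := by
      refine strictMono_nat_of_lt_succ fun i => ?_
      exact lt_of_le_of_lt (Nat.le_add_right _ _) (hc i).2
    refine Set.mem_iInter.2 fun n => ?_
    refine (hf n).2 ρ hplay ?_
    refine ⟨fun j => c (Nat.pair n (j + 1) - 1), ?_, ?_⟩
    · exact le_trans hc0 (hmono.monotone (Nat.zero_le _))
    · intro j
      have hm1 : 1 ≤ Nat.pair n (j + 1) := le_trans (by omega) (Nat.right_le_pair n (j + 1))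
      have hsub : Nat.pair n (j + 1) - 1 + 1 = Nat.pair n (j + 1) := by omega
      have key := hc (Nat.pair n (j + 1) - 1)
      rw [hsub] at key
      simp only [Nat.unpair_pair] at key
      refine ⟨key.1, ?_⟩
      have hlt : Nat.pair n (j + 1) < Nat.pair n (j + 2) :=
        Nat.pair_lt_pair_right n (by omega)
      have : Nat.pair n (j + 1) ≤ Nat.pair n (j + 2) - 1 := by omega
      exact lt_of_lt_of_le key.2 (hmono.monotone this)
end
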